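/- For the 2D problem: minimize d_1 + d_2 subject to 2(d_1+d_2) + d_1² + d_2² = 12 and 1 ≤ d_1, d_2 ≤ 3, the solutions are exactly (1, √10 - 1) and (√10 - 1, 1). -/

import Mathlib

private lemma s10_sq : (Real.sqrt 10)^2 = 10 := Real.sq_sqrt (by norm_num)

private lemma s10_ge3 : (3:ℝ) ≤ Real.sqrt 10 := by
  nlinarith [Real.sqrt_nonneg 10, s10_sq]

private lemma s10_le4 : Real.sqrt 10 ≤ 4 := by
  nlinarith [Real.sqrt_nonneg 10, s10_sq]

set_option maxHeartbeats 800000 in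
private lemma feas_lb (e₁ e₂ : ℝ)
    (h : 2 * (e₁ + e₂) + e₁^2 + e₂^2 = 12 ∧ 1 ≤ e₁ ∧ e₁ ≤ 3 ∧ 1 ≤ e₂ ∧ e₂ ≤ 3) :
    Real.sqrt 10 ≤ e₁ + e₂ := by
  obtain ⟨hc, h1, h2, h3, h4⟩ := h
  set s := Real.sqrt 10 with hsdef
  have hs : s^2 = 10 := s10_sq
  have hs3 : (3:ℝ) ≤ s := s10_ge3
  set x := e₁ + 1 with hx
  set y := e₂ + 1 with hy
  have hxy : x^2 + y^2 = 14 := by rw [hx, hy]; ring_nf; linarith [hc]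
  have hx2 : 2 ≤ x := by rw [hx]; linarith
  have hy2 : 2 ≤ y := by rw [hy]; linarith
  have hx10 : x^2 ≤ 10 := by nlinarith
  have h4le : (4:ℝ) ≤ x^2 := by nlinarith
  have hy2eq : y^2 = 14 - x^2 := by linarith
  have key : 40 ≤ (x*y)^2 := by
    have h1' : (x*y)^2 = x^2 * (14 - x^2) := by rw [mul_pow, hy2eq]
    nlinarith [mul_nonneg (by linarith : (0:ℝ) ≤ x^2 - 4) (by linarith : (0:ℝ) ≤ 10 - x^2)]
  have hxypos : 0 < x * y := mul_pos (by linarith) (by linarith)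
  have hprod : 2 * s ≤ x * y := by nlinarith [key, hs, hs3, hxypos]
  nlinarith [hprod, hs, hs3, hxy, hx2, hy2]

set_option maxHeartbeats 800000 in
theorem stmt15 :
    ∀ d₁ d₂ : ℝ,
      ((2 * (d₁ + d₂) + d₁^2 + d₂^2 = 12 ∧
          1 ≤ d₁ ∧ d₁ ≤ 3 ∧ 1 ≤ d₂ ∧ d₂ ≤ 3) ∧
        ∀ e₁ e₂ : ℝ,
          (2 * (e₁ + e₂) + e₁^2 + e₂^2 = 12 ∧
            1 ≤ e₁ ∧ e₁ ≤ 3 ∧ 1 ≤ e₂ ∧ e₂ ≤ 3) →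
          d₁ + d₂ ≤ e₁ + e₂)
      ↔ ((d₁, d₂) = (1, Real.sqrt 10 - 1) ∨ (d₁, d₂) = (Real.sqrt 10 - 1, 1)) := by
  intro d₁ d₂
  have hs : (Real.sqrt 10)^2 = 10 := s10_sq
  have hs3 : (3:ℝ) ≤ Real.sqrt 10 := s10_ge3
  have hs4 : Real.sqrt 10 ≤ 4 := s10_le4
  have hfeas : 2 * (1 + (Real.sqrt 10 - 1)) + 1^2 + (Real.sqrt 10 - 1)^2 = 12 ∧
      1 ≤ (1:ℝ) ∧ (1:ℝ) ≤ 3 ∧ 1 ≤ Real.sqrt 10 - 1 ∧ Real.sqrt 10 - 1 ≤ 3 := by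
    refine ⟨by linear_combination hs, by norm_num, by norm_num, by linarith, by linarith⟩
  constructor
  · rintro ⟨⟨hc, h1, h2, h3, h4⟩, hopt⟩
    have hub : d₁ + d₂ ≤ Real.sqrt 10 := by
      have := hopt 1 (Real.sqrt 10 - 1) hfeas
      linarith
    have hlb : Real.sqrt 10 ≤ d₁ + d₂ := feas_lb d₁ d₂ ⟨hc, h1, h2, h3, h4⟩
    have heq : d₁ + d₂ = Real.sqrt 10 := le_antisymm hub hlb
    set s := Real.sqrt 10 with hsdef
    set x := d₁ + 1 with hx
    set y := d₂ + 1 with hy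
    have hxy : x^2 + y^2 = 14 := by rw [hx, hy]; ring_nf; linarith [hc]
    have hsum : x + y = s + 2 := by rw [hx, hy]; linarith [heq]
    have hprod : x * y = 2 * s := by
      have h' : (x + y)^2 = (s + 2)^2 := by rw [hsum]
      nlinarith [h', hxy, hs]
    have hx2y2 : x^2 * y^2 = 40 := by linear_combination (x*y + 2*s) * hprod + 4 * hs
    have hzero : (x^2 - 4) * (x^2 - 10) = 0 := by linear_combination x^2 * hxy - hx2y2
    have hxpos : (0:ℝ) < x := by rw [hx]; linarith
    have hypos : (0:ℝ) < y := by rw [hy]; linarith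
    rcases mul_eq_zero.mp hzero with h | h
    · left
      have hfac : (x - 2) * (x + 2) = 0 := by linear_combination h
      have hx2' : x = 2 := by
        rcases mul_eq_zero.mp hfac with h' | h'
        · linarith
        · linarith
      have hy2' : y = s := by
        have hfac2 : (y - s) * (y + s) = 0 := by
          linear_combination hxy - (x + 2) * hx2' - hs
        rcases mul_eq_zero.mp hfac2 with h' | h'
        · linarith
        · linarith
      simp only [Prod.mk.injEq]
      constructor <;> [linarith [hx2', hx]; linarith [hy2', hy]]
    · right
      have hfac : (x - s) * (x + s) = 0 := by linear_combination h - hs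
      have hx2' : x = s := by
        rcases mul_eq_zero.mp hfac with h' | h'
        · linarith
        · linarith
      have hy2' : y = 2 := by
        have hfac2 : (y - 2) * (y + 2) = 0 := by
          linear_combination hxy - (x + s) * hx2' - hs
        rcases mul_eq_zero.mp hfac2 with h' | h'
        · linarith
        · linarith
      simp only [Prod.mk.injEq]
      constructor <;> [linarith [hx2', hx]; linarith [hy2', hy]]
  · rintro (h | h) <;> rw [Prod.mk.injEq] at h <;> obtain ⟨ha, hb⟩ := h <;> subst ha <;> subst hb
    · exact ⟨hfeas, fun e₁ e₂ he => by have := feas_lb e₁ e₂ he; linarith⟩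
    · refine ⟨⟨by linear_combination hs, by linarith, by linarith, by norm_num, by norm_num⟩,
        fun e₁ e₂ he => by have := feas_lb e₁ e₂ he; linarith⟩
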